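/- For every infinite cardinal κ, letting C_κ denote the one-point compactification of the discrete space of cardinality κ, the relation C_κ × C_κ → (C_κ)¹₂ holds: whenever C_κ × C_κ is partitioned into two pieces, one piece contains a homeomorphic copy of C_κ. -/

import Mathlib

open Cardinal Filter Set OnePoint Topology

/-- `HasCopy Y P` : the set `P` (in an ambient space `X`) contains a subspace homeomorphic
to `Y`. -/
def HasCopy (Y : Type*) [TopologicalSpace Y] {X : Type*} [TopologicalSpace X]
    (P : Set X) : Prop :=
  ∃ s : Set X, s ⊆ P ∧ Nonempty (Y ≃ₜ s)

/-- coe composed with an injective map tends to infinity along cofinite. -/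
lemma tendsto_coe_inj_aux {α : Type*} [TopologicalSpace α] [DiscreteTopology α]
    {β : Type*} {j : β → α} (hj : Function.Injective j) :
    Filter.Tendsto (fun b : β => ((j b : α) : OnePoint α)) Filter.cofinite (nhds (∞ : OnePoint α)) := by
  have h1 : Filter.Tendsto (fun a : α => (a : OnePoint α)) Filter.cofinite
      (nhds ((id : OnePoint α → OnePoint α) ∞)) :=
    (OnePoint.continuous_iff_from_discrete (id : OnePoint α → OnePoint α)).mp continuous_id
  exact h1.comp hj.tendsto_cofinite

/-- Master lemma: an injective cofinite-to-`q` sequence inside `P` with `q ∈ P`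
gives a copy of the one-point compactification inside `P`. -/
lemma hasCopy_of_seq {α : Type*} [TopologicalSpace α] [DiscreteTopology α]
    {P : Set (OnePoint α × OnePoint α)} (g : α → OnePoint α × OnePoint α)
    (hg : Function.Injective g) (q : OnePoint α × OnePoint α) (hq : q ∉ Set.range g)
    (htend : Filter.Tendsto g Filter.cofinite (nhds q))
    (hrange : Set.range g ⊆ P) (hqP : q ∈ P) : HasCopy (OnePoint α) P := by
  refine ⟨insert q (Set.range g), Set.insert_subset hqP hrange, ?_⟩
  haveI : T2Space (OnePoint α) := inferInstance
  have hmemf : ∀ x : OnePoint α, x.elim q g ∈ insert q (Set.range g) := by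
    intro x
    match x with
    | OnePoint.infty => exact Set.mem_insert _ _
    | (a : α) => exact Set.mem_insert_of_mem _ ⟨a, rfl⟩
  let f : OnePoint α → ↥(insert q (Set.range g)) := fun x => ⟨x.elim q g, hmemf x⟩
  have hfinj : Function.Injective f := by
    intro x y hxy
    have hxy' : x.elim q g = y.elim q g := congrArg Subtype.val hxy
    match x, y with
    | OnePoint.infty, OnePoint.infty => rfl
    | OnePoint.infty, (b : α) => exact absurd ⟨b, hxy'.symm⟩ hq
    | (a : α), OnePoint.infty => exact absurd ⟨a, hxy'⟩ hq
    | (a : α), (b : α) => exact congrArg _ (hg hxy')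
  have hfsurj : Function.Surjective f := by
    rintro ⟨z, hz⟩
    rcases hz with rfl | ⟨a, rfl⟩
    · exact ⟨∞, rfl⟩
    · exact ⟨a, rfl⟩
  have hfcont : Continuous f := by
    have hcont' : Continuous (fun x : OnePoint α => x.elim q g) := by
      rw [OnePoint.continuous_iff_from_discrete]
      exact htend
    exact Continuous.subtype_mk hcont' hmemf
  exact ⟨(Continuous.homeoOfEquivCompactToT2
    (f := Equiv.ofBijective f ⟨hfinj, hfsurj⟩) hfcont)⟩

/-- Injective choice from a family of large sets. -/
lemma exists_inj_choice {α : Type*} [Infinite α] (col : α → Set α)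
    (hcol : ∀ b, #↥(col b) = #α) : ∃ c : α → α, Function.Injective c ∧ ∀ a, c a ∈ col a := by
  obtain ⟨r, wo, hr⟩ := Cardinal.ord_eq α
  have hseg : ∀ a : α, #{a' // r a' a} < #α := by
    intro a
    rw [← Ordinal.card_typein (r := r)]
    exact Cardinal.card_typein_lt a hr
  have hne : ∀ (a : α) (ih : ∀ a', r a' a → α),
      ((col a) \ (Set.range fun p : {a' // r a' a} => ih p.1 p.2)).Nonempty := by
    intro a ih
    rw [Set.nonempty_iff_ne_empty]
    intro hemp
    have hsub : col a ⊆ Set.range fun p : {a' // r a' a} => ih p.1 p.2 :=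
      Set.diff_eq_empty.mp hemp
    have : #↥(col a) ≤ #{a' // r a' a} :=
      le_trans (Cardinal.mk_le_mk_of_subset hsub) (Cardinal.mk_range_le)
    rw [hcol a] at this
    exact absurd (lt_of_le_of_lt this (hseg a)) (lt_irrefl _)
  haveI := wo
  let c : α → α := (IsWellFounded.wf (r := r)).fix (fun a ih => (hne a ih).some)
  have hc : ∀ a, c a = (hne a (fun a' _ => c a')).some :=
    fun a => (IsWellFounded.wf (r := r)).fix_eq _ a
  have hspec : ∀ a, c a ∈ (col a) \ Set.range (fun p : {a' // r a' a} => c p.1) := by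
    intro a
    rw [hc a]
    exact (hne a (fun a' _ => c a')).some_mem
  refine ⟨c, ?_, fun a => ((hspec a).1 : _)⟩
  intro x y hxy
  by_contra hne'
  rcases trichotomous_of r x y with h | h | h
  · exact (hspec y).2 ⟨⟨x, h⟩, hxy⟩
  · exact hne' h
  · exact (hspec x).2 ⟨⟨y, h⟩, hxy.symm⟩

/-- Key lemma: assuming `(∞, ∞) ∈ X₀`. -/
lemma key_lemma {α : Type*} [TopologicalSpace α] [DiscreteTopology α]
    (hα : Cardinal.aleph0 ≤ #α)
    (X₀ X₁ : Set (OnePoint α × OnePoint α)) (hpart : X₀ ∪ X₁ = Set.univ)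
    (hp : ((∞ : OnePoint α), (∞ : OnePoint α)) ∈ X₀) :
    HasCopy (OnePoint α) X₀ ∨ HasCopy (OnePoint α) X₁ := by
  haveI : Infinite α := Cardinal.infinite_iff.mpr hα
  have hmem : ∀ z : OnePoint α × OnePoint α, z ∈ X₀ ∨ z ∈ X₁ := by
    intro z
    have : z ∈ X₀ ∪ X₁ := hpart.symm ▸ Set.mem_univ z
    exact this
  set col₀ : α → Set α := fun b => {c : α | ((b : OnePoint α), (c : OnePoint α)) ∈ X₀} with hcol₀
  set col₁ : α → Set α := fun b => {c : α | ((b : OnePoint α), (c : OnePoint α)) ∈ X₁} with hcol₁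
  have hcolmax : ∀ b : α, #↥(col₀ b) = #α ∨ #↥(col₁ b) = #α := by
    intro b
    by_contra hcon
    push_neg at hcon
    have h0 : #↥(col₀ b) < #α := lt_of_le_of_ne (Cardinal.mk_set_le _) hcon.1
    have h1 : #↥(col₁ b) < #α := lt_of_le_of_ne (Cardinal.mk_set_le _) hcon.2
    have huniv : col₀ b ∪ col₁ b = Set.univ := by
      ext c
      simp only [Set.mem_union, Set.mem_univ, iff_true]
      exact hmem _
    have : #α ≤ #↥(col₀ b) + #↥(col₁ b) := by
      have := Cardinal.mk_union_le (col₀ b) (col₁ b)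
      rw [huniv, Cardinal.mk_univ] at this
      exact this
    exact absurd (lt_of_le_of_lt this (Cardinal.add_lt_of_lt hα h0 h1)) (lt_irrefl _)
  by_cases h0 : ∃ b : α, ((b : OnePoint α), (∞ : OnePoint α)) ∈ X₀ ∧ #↥(col₀ b) = #α
  · left
    obtain ⟨b, hb, hbcard⟩ := h0
    obtain ⟨e⟩ := Cardinal.eq.mp hbcard.symm
    refine hasCopy_of_seq (fun a => ((b : OnePoint α), ((e a : α) : OnePoint α)))
      ?_ ((b : OnePoint α), (∞ : OnePoint α)) ?_ ?_ ?_ hb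
    · intro x y hxy
      exact e.injective (Subtype.val_injective (OnePoint.coe_injective (congrArg Prod.snd hxy)))
    · rintro ⟨a, ha⟩
      exact OnePoint.coe_ne_infty _ (congrArg Prod.snd ha)
    · exact Filter.Tendsto.prodMk_nhds tendsto_const_nhds
        (tendsto_coe_inj_aux (Subtype.val_injective.comp e.injective))
    · rintro z ⟨a, rfl⟩
      exact (e a).2
  by_cases h1 : ∃ b : α, ((b : OnePoint α), (∞ : OnePoint α)) ∈ X₁ ∧ #↥(col₁ b) = #α
  · right
    obtain ⟨b, hb, hbcard⟩ := h1
    obtain ⟨e⟩ := Cardinal.eq.mp hbcard.symm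
    refine hasCopy_of_seq (fun a => ((b : OnePoint α), ((e a : α) : OnePoint α)))
      ?_ ((b : OnePoint α), (∞ : OnePoint α)) ?_ ?_ ?_ hb
    · intro x y hxy
      exact e.injective (Subtype.val_injective (OnePoint.coe_injective (congrArg Prod.snd hxy)))
    · rintro ⟨a, ha⟩
      exact OnePoint.coe_ne_infty _ (congrArg Prod.snd ha)
    · exact Filter.Tendsto.prodMk_nhds tendsto_const_nhds
        (tendsto_coe_inj_aux (Subtype.val_injective.comp e.injective))
    · rintro z ⟨a, rfl⟩
      exact (e a).2
  push_neg at h1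
  set T : Set α := {b : α | ((b : OnePoint α), (∞ : OnePoint α)) ∈ X₁} with hT
  have hT0 : ∀ b ∈ T, #↥(col₀ b) = #α := by
    intro b hb
    rcases hcolmax b with h | h
    · exact h
    · exact absurd h (h1 b hb)
  by_cases hTcard : #↥T = #α
  · left
    obtain ⟨e⟩ := Cardinal.eq.mp hTcard.symm
    obtain ⟨c, hcinj, hcmem⟩ := exists_inj_choice (fun a => col₀ (e a)) (fun a => hT0 _ (e a).2)
    refine hasCopy_of_seq (fun a => (((e a : α) : OnePoint α), ((c a : α) : OnePoint α)))
      ?_ ((∞ : OnePoint α), (∞ : OnePoint α)) ?_ ?_ ?_ hp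
    · intro x y hxy
      exact e.injective (Subtype.val_injective (OnePoint.coe_injective (congrArg Prod.fst hxy)))
    · rintro ⟨a, ha⟩
      exact OnePoint.coe_ne_infty _ (congrArg Prod.fst ha)
    · exact Filter.Tendsto.prodMk_nhds
        (tendsto_coe_inj_aux (Subtype.val_injective.comp e.injective))
        (tendsto_coe_inj_aux hcinj)
    · rintro z ⟨a, rfl⟩
      exact hcmem a
  · left
    have hTlt : #↥T < #α := lt_of_le_of_ne (Cardinal.mk_set_le _) hTcard
    have hTc : #↥(Tᶜ) = #α := Cardinal.mk_compl_of_infinite T hTlt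
    obtain ⟨e⟩ := Cardinal.eq.mp hTc.symm
    refine hasCopy_of_seq (fun a => (((e a : α) : OnePoint α), (∞ : OnePoint α)))
      ?_ ((∞ : OnePoint α), (∞ : OnePoint α)) ?_ ?_ ?_ hp
    · intro x y hxy
      exact e.injective (Subtype.val_injective (OnePoint.coe_injective (congrArg Prod.fst hxy)))
    · rintro ⟨a, ha⟩
      exact OnePoint.coe_ne_infty _ (congrArg Prod.fst ha)
    · exact Filter.Tendsto.prodMk_nhds
        (tendsto_coe_inj_aux (Subtype.val_injective.comp e.injective)) tendsto_const_nhds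
    · rintro z ⟨a, rfl⟩
      rcases hmem (((e a : α) : OnePoint α), (∞ : OnePoint α)) with h | h
      · exact h
      · exact absurd h (e a).2

/-- For every infinite cardinal `κ`, with `C_κ` the one-point compactification of the
discrete space of cardinality `κ`, one has `C_κ × C_κ → (C_κ)¹₂`. -/
theorem onePoint_square_arrow (κ : Cardinal) (hκ : Cardinal.aleph0 ≤ κ)
    (α : Type*) [TopologicalSpace α] [DiscreteTopology α] (hcard : Cardinal.mk α = κ)
    (X₀ X₁ : Set (OnePoint α × OnePoint α)) (hpart : X₀ ∪ X₁ = Set.univ) :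
    HasCopy (OnePoint α) X₀ ∨ HasCopy (OnePoint α) X₁ := by
  have hα : Cardinal.aleph0 ≤ #α := hcard ▸ hκ
  have hmem : ((∞ : OnePoint α), (∞ : OnePoint α)) ∈ X₀ ∪ X₁ :=
    hpart.symm ▸ Set.mem_univ _
  rcases hmem with h | h
  · exact key_lemma hα X₀ X₁ hpart h
  · exact (key_lemma hα X₁ X₀ (by rw [Set.union_comm]; exact hpart) h).symm
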